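/- For an integer n > 1 and each 1 ≤ i ≤ n-1, the numbers δ_i satisfy δ_i = ∏_{j=1}^{n-1} (1 - δ_j)^{2·min(i,j)}. -/

import Mathlib

open Real Finset

/-- `δ_j = sin²(π/(2n+1))/sin²(π(j+1)/(2n+1))`. -/
noncomputable def del (n j : ℕ) : ℝ :=
  Real.sin (π / (2 * n + 1)) ^ 2 / Real.sin (π * (j + 1) / (2 * n + 1)) ^ 2

lemma sin_sq_sub_sin_sq' (A x : ℝ) :
    Real.sin (A + x) * Real.sin (A - x) = Real.sin A ^ 2 - Real.sin x ^ 2 := by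
  rw [Real.sin_add, Real.sin_sub]
  nlinarith [Real.sin_sq_add_cos_sq A, Real.sin_sq_add_cos_sq x]

noncomputable def aa (n j : ℕ) : ℝ := Real.sin (j * π / (2 * n + 1))

lemma aa_pos (n : ℕ) {j : ℕ} (h1 : 1 ≤ j) (h2 : j ≤ 2 * n) : 0 < aa n j := by
  have hj1 : (1 : ℝ) ≤ (j : ℝ) := by exact_mod_cast h1
  have hj2 : (j : ℝ) < 2 * n + 1 := by exact_mod_cast Nat.lt_succ_of_le h2
  have hd : (0 : ℝ) < 2 * n + 1 := by positivity
  apply Real.sin_pos_of_pos_of_lt_pi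
  · apply div_pos _ hd
    nlinarith [Real.pi_pos]
  · rw [div_lt_iff₀ hd]
    nlinarith [Real.pi_pos]

lemma aa_ne (n : ℕ) {j : ℕ} (h1 : 1 ≤ j) (h2 : j ≤ 2 * n) : aa n j ≠ 0 :=
  (aa_pos n h1 h2).ne'

lemma del_eq (n j : ℕ) : del n j = aa n 1 ^ 2 / aa n (j + 1) ^ 2 := by
  unfold del aa
  push_cast
  ring_nf

lemma aa_symm (n : ℕ) : aa n (n + 1) = aa n n := by
  unfold aa
  have h : ((n : ℝ) + 1) * π / (2 * n + 1) = π - n * π / (2 * n + 1) := by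
    have hd : (2 * (n : ℝ) + 1) ≠ 0 := by positivity
    field_simp
    ring
  push_cast
  rw [h, Real.sin_pi_sub]

lemma one_sub_del (n : ℕ) (hn : 1 < n) {j : ℕ} (h1 : 1 ≤ j) (h2 : j ≤ n - 1) :
    1 - del n j = aa n j * aa n (j + 2) / aa n (j + 1) ^ 2 := by
  have hjn : j + 2 ≤ 2 * n := by omega
  have hne : aa n (j + 1) ≠ 0 := aa_ne n (by omega) (by omega)
  rw [del_eq]
  have key : aa n j * aa n (j + 2) = aa n (j + 1) ^ 2 - aa n 1 ^ 2 := by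
    unfold aa
    have e1 : ((j : ℝ) + 2) * π / (2 * n + 1)
        = ((j : ℝ) + 1) * π / (2 * n + 1) + 1 * π / (2 * n + 1) := by ring
    have e2 : ((j : ℝ)) * π / (2 * n + 1)
        = ((j : ℝ) + 1) * π / (2 * n + 1) - 1 * π / (2 * n + 1) := by ring
    push_cast
    rw [e1, e2, mul_comm]
    exact sin_sq_sub_sin_sq' _ _
  field_simp
  linarith [key]

/-- Telescoping product from `n - k` to `n - 1`. -/
lemma prod_one_sub (n : ℕ) (hn : 1 < n) (k : ℕ) (hk : k ≤ n - 1) :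
    ∏ j ∈ Finset.Icc (n - k) (n - 1), (1 - del n j)
      = aa n (n - k) / aa n (n - k + 1) := by
  induction k with
  | zero =>
      simp only [Nat.sub_zero]
      rw [Finset.Icc_eq_empty (by omega), Finset.prod_empty, aa_symm n,
        div_self (aa_ne n (by omega) (by omega))]
  | succ k ih =>
      have hk' : k ≤ n - 1 := by omega
      have hm : 1 ≤ n - (k + 1) := by omega
      have hins : Finset.Icc (n - (k + 1)) (n - 1)
          = insert (n - (k + 1)) (Finset.Icc (n - k) (n - 1)) := by
        ext x
        simp only [Finset.mem_Icc, Finset.mem_insert]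
        omega
      have hnot : n - (k + 1) ∉ Finset.Icc (n - k) (n - 1) := by
        simp only [Finset.mem_Icc]; omega
      rw [hins, Finset.prod_insert hnot, ih hk',
        one_sub_del n hn hm (by omega)]
      have e1 : n - (k + 1) + 1 = n - k := by omega
      have e2 : n - (k + 1) + 2 = n - k + 1 := by omega
      rw [e1, e2]
      have h1 : aa n (n - k) ≠ 0 := aa_ne n (by omega) (by omega)
      have h2 : aa n (n - k + 1) ≠ 0 := aa_ne n (by omega) (by omega)
      field_simp

lemma prod_one_sub' (n : ℕ) (hn : 1 < n) {m : ℕ} (h1 : 1 ≤ m) (h2 : m ≤ n) :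
    ∏ j ∈ Finset.Icc m (n - 1), (1 - del n j) = aa n m / aa n (m + 1) := by
  have h := prod_one_sub n hn (n - m) (by omega)
  have e : n - (n - m) = m := by omega
  rwa [e] at h

theorem del_prod_identity (n : ℕ) (hn : 1 < n) (i : ℕ) (hi1 : 1 ≤ i) (hi2 : i ≤ n - 1) :
    del n i = ∏ j ∈ Finset.Icc 1 (n - 1), (1 - del n j) ^ (2 * min i j) := by
  revert hi2
  induction i, hi1 using Nat.le_induction with
  | base =>
      intro hi2
      have : ∀ j ∈ Finset.Icc 1 (n - 1), (1 - del n j) ^ (2 * min 1 j)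
          = (1 - del n j) ^ 2 := by
        intro j hj
        simp only [Finset.mem_Icc] at hj
        have : min 1 j = 1 := by omega
        rw [this, mul_one]
      rw [Finset.prod_congr rfl this, Finset.prod_pow,
        prod_one_sub' n hn (le_refl 1) (by omega), div_pow, del_eq]
  | succ i hi ih =>
      intro hi2
      have hih := ih (by omega)
      have hsplit : ∀ j ∈ Finset.Icc 1 (n - 1), (1 - del n j) ^ (2 * min (i + 1) j)
          = (1 - del n j) ^ (2 * min i j) * (if i + 1 ≤ j then (1 - del n j) ^ 2 else 1) := by
        intro j hj
        simp only [Finset.mem_Icc] at hj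
        by_cases h : i + 1 ≤ j
        · rw [if_pos h, ← pow_add]
          congr 1
          omega
        · rw [if_neg h, mul_one]
          congr 1
          omega
      have hfilt : Finset.filter (fun j => i + 1 ≤ j) (Finset.Icc 1 (n - 1))
          = Finset.Icc (i + 1) (n - 1) := by
        ext x
        simp only [Finset.mem_filter, Finset.mem_Icc]
        omega
      rw [Finset.prod_congr rfl hsplit, Finset.prod_mul_distrib, ← hih,
        ← Finset.prod_filter, hfilt, Finset.prod_pow,
        prod_one_sub' n hn (by omega : 1 ≤ i + 1) (by omega), div_pow,
        del_eq, del_eq]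
      have h1 : aa n (i + 1) ≠ 0 := aa_ne n (by omega) (by omega)
      have h2 : aa n (i + 1 + 1) ≠ 0 := aa_ne n (by omega) (by omega)
      field_simp
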